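/- Let a₁, a₂, a₃ ∈ (0,1), and define Q(v₁,v₂,v₃,v₄) = |v₁| − max{|v₂|/a₁, |v₃|/a₂, |v₄|/a₃}, with cone Q⁺(0) = {v : Q(v) ≥ 0}. Let B ⊂ ℝ⁴ be convex with 0 ∈ B, and f : B → ℝ⁴ a C¹ map with f(0) = 0. Suppose every Jacobian Df(x) for x ∈ B, written in block form ((A₁₁, A₁₂), (A₂₁, A₂₂)) with A₁₁ a 1×1 block and A₁₂ a 1×3 block, satisfies A₁₁ > c > 0 and ‖A₁₂‖_max ≤ K. Let m = c − K·max(a₁,a₂,a₃). Then for every v ∈ Q⁺(0) ∩ B one has ‖f(v)‖_max ≥ m·‖v‖_max. -/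

import Mathlib

set_option maxHeartbeats 1000000


/-- **Expansion in cones.** If every Jacobian of `f` over the convex set `B` has its
`(1,1)` entry greater than `c > 0` and the induced max-norm of the remaining entries of the
first row (i.e. the sum of their absolute values) bounded by `K`, then on the cone
`Q⁺(0) = {v : |v₂| ≤ a₁|v₁|, |v₃| ≤ a₂|v₁|, |v₄| ≤ a₃|v₁|}` intersected with `B` one has
`‖f(v)‖_max ≥ (c - K·max(a₁,a₂,a₃))·‖v‖_max`. -/
theorem expansion_in_cones
    (a₁ a₂ a₃ : ℝ) (ha₁ : a₁ ∈ Set.Ioo (0:ℝ) 1) (ha₂ : a₂ ∈ Set.Ioo (0:ℝ) 1)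
    (ha₃ : a₃ ∈ Set.Ioo (0:ℝ) 1)
    (B : Set (Fin 4 → ℝ)) (hB : Convex ℝ B) (h0B : (0 : Fin 4 → ℝ) ∈ B)
    (f : (Fin 4 → ℝ) → (Fin 4 → ℝ)) (hf0 : f 0 = 0)
    (J : (Fin 4 → ℝ) → Matrix (Fin 4) (Fin 4) ℝ)
    (hderiv : ∀ x ∈ B, HasFDerivWithinAt f ((J x).mulVecLin.toContinuousLinearMap) B x)
    (c K : ℝ) (hc : 0 < c)
    (hA11 : ∀ x ∈ B, c < J x 0 0)
    (hA12 : ∀ x ∈ B, |J x 0 1| + |J x 0 2| + |J x 0 3| ≤ K)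
    (m : ℝ) (hm : m = c - K * max a₁ (max a₂ a₃)) :
    ∀ v ∈ B, |v 1| ≤ a₁ * |v 0| → |v 2| ≤ a₂ * |v 0| → |v 3| ≤ a₃ * |v 0| →
      m * ‖v‖ ≤ ‖f v‖ := by
  intro v hvB h1 h2 h3
  obtain ⟨ha₁0, ha₁1⟩ := ha₁
  obtain ⟨ha₂0, ha₂1⟩ := ha₂
  obtain ⟨ha₃0, ha₃1⟩ := ha₃
  -- trivial case v = 0
  by_cases hv0 : v 0 = 0
  · have e1 : v 1 = 0 := abs_nonpos_iff.mp (by rw [hv0] at h1; simpa using h1)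
    have e2 : v 2 = 0 := abs_nonpos_iff.mp (by rw [hv0] at h2; simpa using h2)
    have e3 : v 3 = 0 := abs_nonpos_iff.mp (by rw [hv0] at h3; simpa using h3)
    have hv : v = 0 := by
      funext i
      fin_cases i
      · simpa using hv0
      · simpa using e1
      · simpa using e2
      · simpa using e3
    rw [hv, hf0]
    simp
  -- Notation
  set s : ℝ := if 0 ≤ v 0 then 1 else -1 with hs
  have hsv : s * v 0 = |v 0| := by
    rw [hs]; split
    · rw [one_mul, abs_of_nonneg ‹_›]
    · rw [abs_of_neg (lt_of_not_ge ‹_›)]; ring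
  have hs1 : s = 1 ∨ s = -1 := by rw [hs]; split <;> simp
  have habs : |s| = 1 := by rcases hs1 with h | h <;> simp [h]
  set A : ℝ := max a₁ (max a₂ a₃) with hA
  have hA0 : 0 < A := lt_of_lt_of_le ha₁0 (le_max_left _ _)
  have hA1 : A < 1 := by
    simp only [hA, max_lt_iff]; exact ⟨ha₁1, ha₂1, ha₃1⟩
  have hv0pos : 0 < |v 0| := abs_pos.mpr hv0
  have hKnn : 0 ≤ K := le_trans (by positivity) (hA12 0 h0B)
  -- the segment map and membership
  have hmem : ∀ t ∈ Set.Icc (0:ℝ) 1, t • v ∈ B := by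
    intro t ht
    have := hB h0B hvB (a := 1 - t) (b := t) (by linarith [ht.2]) ht.1 (by ring)
    simpa using this
  -- derivative of ψ t = s * f (t • v) 0 - m * |v 0| * t
  set ψ : ℝ → ℝ := fun t => s * f (t • v) 0 - m * |v 0| * t with hψ
  have hder : ∀ t ∈ Set.Icc (0:ℝ) 1,
      HasDerivWithinAt ψ (s * ((J (t • v)).mulVec v 0) - m * |v 0|) (Set.Icc 0 1) t := by
    intro t ht
    have hγ : HasDerivWithinAt (fun t : ℝ => t • v) v (Set.Icc 0 1) t := by
      exact (by simpa using (hasDerivAt_id t).smul_const v : HasDerivAt (fun t : ℝ => t • v) v t).hasDerivWithinAt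
    have hcomp : HasDerivWithinAt (fun t : ℝ => f (t • v)) ((J (t • v)).mulVec v)
        (Set.Icc 0 1) t := by
      have := (hderiv (t • v) (hmem t ht)).comp_hasDerivWithinAt t hγ hmem
      simpa [Matrix.mulVecLin, Function.comp_def] using this
    have hev : HasDerivWithinAt (fun t : ℝ => f (t • v) 0) ((J (t • v)).mulVec v 0)
        (Set.Icc 0 1) t := by
      have hproj := (ContinuousLinearMap.proj (R := ℝ) (φ := fun _ : Fin 4 => ℝ) 0).hasFDerivAt
        (x := f (t • v))
      have := hproj.comp_hasDerivWithinAt t hcomp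
      simpa [Function.comp_def] using this
    have := ((hev.const_mul s).sub ((hasDerivWithinAt_id t _).const_mul (m * |v 0|)))
    simpa [ψ, mul_comm, Pi.sub_def] using this
  -- derivative nonnegativity
  have hnonneg : ∀ t ∈ Set.Icc (0:ℝ) 1,
      0 ≤ s * ((J (t • v)).mulVec v 0) - m * |v 0| := by
    intro t ht
    set x := t • v with hx
    have hxB : x ∈ B := hmem t ht
    have hJc := hA11 x hxB
    have hJK := hA12 x hxB
    have hmv : (J x).mulVec v 0 =
        J x 0 0 * v 0 + J x 0 1 * v 1 + J x 0 2 * v 2 + J x 0 3 * v 3 := by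
      simp [Matrix.mulVec, dotProduct, Fin.sum_univ_four]
    rw [hmv]
    have h1' : |v 1| ≤ A * |v 0| := le_trans h1 (by nlinarith [le_max_left a₁ (max a₂ a₃)])
    have h2' : |v 2| ≤ A * |v 0| := le_trans h2 (by
      nlinarith [le_trans (le_max_left a₂ a₃) (le_max_right a₁ (max a₂ a₃))])
    have h3' : |v 3| ≤ A * |v 0| := le_trans h3 (by
      nlinarith [le_trans (le_max_right a₂ a₃) (le_max_right a₁ (max a₂ a₃))])
    have e1 : s * (J x 0 1 * v 1) ≥ -(|J x 0 1| * (A * |v 0|)) := by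
      have : |s * (J x 0 1 * v 1)| ≤ |J x 0 1| * (A * |v 0|) := by
        rw [abs_mul, habs, one_mul, abs_mul]
        exact mul_le_mul_of_nonneg_left h1' (abs_nonneg _)
      linarith [neg_abs_le (s * (J x 0 1 * v 1))]
    have e2 : s * (J x 0 2 * v 2) ≥ -(|J x 0 2| * (A * |v 0|)) := by
      have : |s * (J x 0 2 * v 2)| ≤ |J x 0 2| * (A * |v 0|) := by
        rw [abs_mul, habs, one_mul, abs_mul]
        exact mul_le_mul_of_nonneg_left h2' (abs_nonneg _)
      linarith [neg_abs_le (s * (J x 0 2 * v 2))]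
    have e3 : s * (J x 0 3 * v 3) ≥ -(|J x 0 3| * (A * |v 0|)) := by
      have : |s * (J x 0 3 * v 3)| ≤ |J x 0 3| * (A * |v 0|) := by
        rw [abs_mul, habs, one_mul, abs_mul]
        exact mul_le_mul_of_nonneg_left h3' (abs_nonneg _)
      linarith [neg_abs_le (s * (J x 0 3 * v 3))]
    have e0 : s * (J x 0 0 * v 0) = J x 0 0 * |v 0| := by
      rw [← hsv]; ring
    have hsum : (|J x 0 1| + |J x 0 2| + |J x 0 3|) * (A * |v 0|) ≤ K * (A * |v 0|) :=
      mul_le_mul_of_nonneg_right hJK (by positivity)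
    have hJc' : c * |v 0| ≤ J x 0 0 * |v 0| :=
      mul_le_mul_of_nonneg_right hJc.le (abs_nonneg _)
    have hexp : s * (J x 0 0 * v 0 + J x 0 1 * v 1 + J x 0 2 * v 2 + J x 0 3 * v 3)
        = s * (J x 0 0 * v 0) + s * (J x 0 1 * v 1) + s * (J x 0 2 * v 2)
          + s * (J x 0 3 * v 3) := by ring
    have hsum' : (|J x 0 1| + |J x 0 2| + |J x 0 3|) * (A * |v 0|)
        = |J x 0 1| * (A * |v 0|) + |J x 0 2| * (A * |v 0|)
          + |J x 0 3| * (A * |v 0|) := by ring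
    have hrhs : (c - K * A) * |v 0| = c * |v 0| - K * (A * |v 0|) := by ring
    rw [hm, hexp]
    have : (c - K * A) * |v 0| ≤ s * (J x 0 0 * v 0) + s * (J x 0 1 * v 1)
        + s * (J x 0 2 * v 2) + s * (J x 0 3 * v 3) := by
      rw [hrhs, e0]
      linarith [hsum, hsum'.symm.le, e1, e2, e3, hJc']
    linarith [this]
  -- monotonicity of ψ on [0,1]
  have hmono : MonotoneOn ψ (Set.Icc 0 1) := by
    apply monotoneOn_of_hasDerivWithinAt_nonneg (convex_Icc 0 1)
      (f' := fun t => s * ((J (t • v)).mulVec v 0) - m * |v 0|)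
    · intro t ht
      exact (hder t ht).continuousWithinAt
    · intro t ht
      exact (hder t (interior_subset ht)).mono interior_subset
    · intro t ht
      exact hnonneg t (interior_subset ht)
  have hψ0 : ψ 0 = 0 := by simp [ψ, hf0]
  have key : m * |v 0| ≤ s * f v 0 := by
    have := hmono (Set.left_mem_Icc.mpr zero_le_one) (Set.right_mem_Icc.mpr zero_le_one)
      zero_le_one
    rw [hψ0] at this
    simp only [ψ, one_smul, mul_one] at this
    linarith
  -- norms
  have hnv : ‖v‖ = |v 0| := by
    apply le_antisymm
    · apply (pi_norm_le_iff_of_nonneg (abs_nonneg _)).mpr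
      intro i
      have hb1 : |v 1| ≤ |v 0| := le_trans h1 (by nlinarith [abs_nonneg (v 0)])
      have hb2 : |v 2| ≤ |v 0| := le_trans h2 (by nlinarith [abs_nonneg (v 0)])
      have hb3 : |v 3| ≤ |v 0| := le_trans h3 (by nlinarith [abs_nonneg (v 0)])
      fin_cases i
      · simp [Real.norm_eq_abs]
      · simpa [Real.norm_eq_abs] using hb1
      · simpa [Real.norm_eq_abs] using hb2
      · simpa [Real.norm_eq_abs] using hb3
    · simpa [Real.norm_eq_abs] using norm_le_pi_norm v 0
  have hfv : |f v 0| ≤ ‖f v‖ := by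
    simpa [Real.norm_eq_abs] using norm_le_pi_norm (f v) 0
  have : s * f v 0 ≤ |f v 0| := by
    calc s * f v 0 ≤ |s * f v 0| := le_abs_self _
    _ = |f v 0| := by rw [abs_mul, habs, one_mul]
  rw [hnv]
  linarith
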